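/- arXiv:1908.02633 — 3 statements merged into one kernel-verified Lean document; each statement's English description precedes it below -/
import Mathlib

section
/- Let P be a prop, C a symmetric monoidal category, and s a supply of P in C. Then every component of the associator ((a ⊗ b) ⊗ c ≅ a ⊗ (b ⊗ c)), of the left unitor (I ⊗ a ≅ a), of the right unitor (a ⊗ I ≅ a), and of the braiding (a ⊗ b ≅ b ⊗ a) of C, as well as their inverses, is an s-homomorphism. -/
open CategoryTheory MonoidalCategory

universe v u

/-- A prop: a strict symmetric monoidal category whose objects are the natural numbers,
with tensor product of objects given by addition and unit `0`. -/
structure PROP where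
  Hom : ℕ → ℕ → Type
  id : ∀ m, Hom m m
  comp : ∀ {m n p}, Hom m n → Hom n p → Hom m p
  id_comp : ∀ {m n} (f : Hom m n), comp (id m) f = f
  comp_id : ∀ {m n} (f : Hom m n), comp f (id n) = f
  assoc : ∀ {m n p q} (f : Hom m n) (g : Hom n p) (h : Hom p q),
    comp (comp f g) h = comp f (comp g h)
  add : ∀ {m₁ n₁ m₂ n₂}, Hom m₁ n₁ → Hom m₂ n₂ → Hom (m₁ + m₂) (n₁ + n₂)
  add_id : ∀ m n, add (id m) (id n) = id (m + n)
  add_comp : ∀ {m₁ n₁ p₁ m₂ n₂ p₂} (f₁ : Hom m₁ n₁) (g₁ : Hom n₁ p₁)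
    (f₂ : Hom m₂ n₂) (g₂ : Hom n₂ p₂),
    add (comp f₁ g₁) (comp f₂ g₂) = comp (add f₁ f₂) (add g₁ g₂)
  add_assoc : ∀ {m₁ n₁ m₂ n₂ m₃ n₃} (f₁ : Hom m₁ n₁) (f₂ : Hom m₂ n₂) (f₃ : Hom m₃ n₃),
    HEq (add (add f₁ f₂) f₃) (add f₁ (add f₂ f₃))
  add_zero : ∀ {m n} (f : Hom m n), add f (id 0) = f
  zero_add : ∀ {m n} (f : Hom m n), HEq (add (id 0) f) f
  braid : ∀ m n, Hom (m + n) (n + m)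
  braid_naturality : ∀ {m₁ n₁ m₂ n₂} (f : Hom m₁ n₁) (g : Hom m₂ n₂),
    comp (add f g) (braid n₁ n₂) = comp (braid m₁ m₂) (add g f)
  symmetry : ∀ m n, comp (braid m n) (braid n m) = id (m + n)
  hexagon : ∀ m n p,
    HEq (braid (m + n) p)
      (comp (cast (by rw [Nat.add_assoc, Nat.add_assoc] :
              Hom (m + (n + p)) (m + (p + n)) = Hom ((m + n) + p) ((m + p) + n))
            (add (id m) (braid n p)))
        (add (braid m p) (id n)))

section

variable {C : Type u} [Category.{v} C] [MonoidalCategory C]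

/-- The left-bracketed `m`-fold tensor power of an object. -/
def pow (c : C) : ℕ → C
  | 0 => 𝟙_ C
  | n + 1 => pow c n ⊗ c

/-- The `m`-fold tensor power of a morphism. -/
def powHom {c d : C} (f : c ⟶ d) : ∀ m, pow c m ⟶ pow d m
  | 0 => 𝟙 _
  | m + 1 => powHom f m ⊗ₘ f

/-- The canonical coherence isomorphism `c^⊗m ⊗ c^⊗n ≅ c^⊗(m+n)`. -/
def powAdd (c : C) : ∀ m n, pow c m ⊗ pow c n ≅ pow c (m + n)
  | m, 0 => ρ_ (pow c m)
  | m, n + 1 => (α_ (pow c m) (pow c n) c).symm ≪≫ whiskerRightIso (powAdd c m n) c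

variable [SymmetricCategory C]

/-- The canonical "middle four exchange" coherence isomorphism. -/
def exch (a b e f : C) : (a ⊗ b) ⊗ (e ⊗ f) ≅ (a ⊗ e) ⊗ (b ⊗ f) :=
  α_ a b (e ⊗ f) ≪≫
    whiskerLeftIso a ((α_ b e f).symm ≪≫ whiskerRightIso (β_ b e) f ≪≫ α_ e b f) ≪≫
      (α_ a e (b ⊗ f)).symm

/-- The canonical coherence isomorphism `σ : c^⊗m ⊗ d^⊗m ≅ (c ⊗ d)^⊗m`. -/
def powMul (c d : C) : ∀ m, pow c m ⊗ pow d m ≅ pow (c ⊗ d) m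
  | 0 => λ_ (𝟙_ C)
  | m + 1 => exch (pow c m) c (pow d m) d ≪≫ whiskerRightIso (powMul c d m) (c ⊗ d)

/-- The canonical coherence isomorphism `σ : I ≅ I^⊗m`. -/
def powUnit : ∀ m, (𝟙_ C) ≅ (pow (𝟙_ C : C) m)
  | 0 => Iso.refl _
  | m + 1 => powUnit m ≪≫ (ρ_ _).symm

end

/-- A supply of a prop `P` in a symmetric monoidal category `C`:
for each object `c` a strong symmetric monoidal functor `s_c : P ⥤ C` with
`s_c m = c^⊗m`, whose structure isomorphisms are the canonical coherence isos
(fields `map_id`, `map_comp`, `map_add`, `map_braid`), and which is compatible with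
the monoidal product and unit of `C` (fields `tensor` and `unit`). -/
structure Supply (P : PROP) (C : Type u) [Category.{v} C] [MonoidalCategory C]
    [SymmetricCategory C] where
  map : ∀ (c : C) {m n : ℕ}, P.Hom m n → (pow c m ⟶ pow c n)
  map_id : ∀ (c : C) (m : ℕ), map c (P.id m) = 𝟙 (pow c m)
  map_comp : ∀ (c : C) {m n p : ℕ} (μ : P.Hom m n) (ν : P.Hom n p),
    map c (P.comp μ ν) = map c μ ≫ map c ν
  map_add : ∀ (c : C) {m₁ n₁ m₂ n₂ : ℕ} (μ : P.Hom m₁ n₁) (ν : P.Hom m₂ n₂),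
    (powAdd c m₁ m₂).hom ≫ map c (P.add μ ν) = (map c μ ⊗ₘ map c ν) ≫ (powAdd c n₁ n₂).hom
  map_braid : ∀ (c : C) (m n : ℕ),
    map c (P.braid m n) =
      (powAdd c m n).inv ≫ (β_ (pow c m) (pow c n)).hom ≫ (powAdd c n m).hom
  tensor : ∀ (c d : C) {m n : ℕ} (μ : P.Hom m n),
    (map c μ ⊗ₘ map d μ) ≫ (powMul c d n).hom = (powMul c d m).hom ≫ map (c ⊗ d) μ
  unit : ∀ {m n : ℕ} (μ : P.Hom m n),
    (powUnit m).hom ≫ map (𝟙_ C) μ = (powUnit n).hom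

/-- `f : c ⟶ d` is an `s`-homomorphism. -/
def Supply.IsHomomorphism {P : PROP} {C : Type u} [Category.{v} C] [MonoidalCategory C]
    [SymmetricCategory C] (s : Supply P C) {c d : C} (f : c ⟶ d) : Prop :=
  ∀ {m n : ℕ} (μ : P.Hom m n), powHom f m ≫ s.map d μ = s.map c μ ≫ powHom f n

section AuxLemmas

open BraidedCategory

variable {C : Type u} [Category.{v} C] [MonoidalCategory C]

@[simp] theorem powHom_id (c : C) : ∀ m, powHom (𝟙 c) m = 𝟙 (pow c m)
  | 0 => rfl
  | m + 1 => by simp [powHom, powHom_id c m, pow]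

theorem powHom_comp {c d e : C} (f : c ⟶ d) (g : d ⟶ e) :
    ∀ m, powHom (f ≫ g) m = powHom f m ≫ powHom g m
  | 0 => by simp [powHom]; exact (Category.comp_id _).symm
  | m + 1 => by simp only [powHom, powHom_comp f g m]; exact (tensorHom_comp_tensorHom _ _ _ _).symm

variable [SymmetricCategory C]

theorem exch_hom (a b e f : C) : (exch a b e f).hom = tensorμ a b e f := by
  simp [exch, tensorμ]

theorem powMul_succ_hom (c d : C) (m : ℕ) :
    (powMul c d (m + 1)).hom =
      tensorμ (pow c m) c (pow d m) d ≫ ((powMul c d m).hom ▷ (c ⊗ d)) := by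
  simp only [powMul, Iso.trans_hom, exch_hom, whiskerRightIso_hom]
  rw [← exch_hom]; rfl

theorem powMul_natural {c c' d d' : C} (f : c ⟶ c') (g : d ⟶ d') :
    ∀ m, (powHom f m ⊗ₘ powHom g m) ≫ (powMul c' d' m).hom
      = (powMul c d m).hom ≫ powHom (f ⊗ₘ g) m
  | 0 => by simp [powHom, powMul, pow]
  | m + 1 => by
    show ((powHom f m ⊗ₘ f) ⊗ₘ (powHom g m ⊗ₘ g)) ≫ _ = _ ≫ (powHom (f ⊗ₘ g) m ⊗ₘ (f ⊗ₘ g))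
    rw [powMul_succ_hom, powMul_succ_hom, ← Category.assoc, tensorμ_natural,
      Category.assoc, Category.assoc, ← tensorHom_id, ← tensorHom_id, tensorHom_comp_tensorHom,
      tensorHom_comp_tensorHom, Category.comp_id, Category.id_comp, powMul_natural f g m]

theorem braiding_tensorMu (X₁ X₂ Y₁ Y₂ : C) :
    (β_ (X₁ ⊗ X₂) (Y₁ ⊗ Y₂)).hom ≫ tensorμ Y₁ Y₂ X₁ X₂ =
      tensorμ X₁ X₂ Y₁ Y₂ ≫ ((β_ X₁ Y₁).hom ⊗ₘ (β_ X₂ Y₂).hom) := by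
  simp only [tensorμ, braiding_tensor_right_hom, braiding_tensor_left_hom,
    comp_whiskerRight, whisker_assoc, MonoidalCategory.whiskerLeft_comp, Category.assoc,
    pentagon_assoc, pentagon_inv_hom_hom_hom_inv_assoc, Iso.inv_hom_id_assoc,
    whiskerLeft_hom_inv_assoc]
  slice_lhs 11 12 =>
    rw [← MonoidalCategory.whiskerLeft_comp, ← comp_whiskerRight, SymmetricCategory.symmetry]
  rw [MonoidalCategory.tensorHom_def]
  simp only [id_whiskerRight, MonoidalCategory.whiskerLeft_id, Category.id_comp, Category.assoc]
  monoidal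

theorem powMul_braiding (a b : C) :
    ∀ m, (β_ (pow a m) (pow b m)).hom ≫ (powMul b a m).hom
      = (powMul a b m).hom ≫ powHom (β_ a b).hom m
  | 0 => by
    dsimp [pow, powMul, powHom]
    rw [braiding_tensorUnit_left]
    simp [unitors_equal]
  | m + 1 => by
    show (β_ (pow a m ⊗ a) (pow b m ⊗ b)).hom ≫ _ = _ ≫ (powHom (β_ a b).hom m ⊗ₘ (β_ a b).hom)
    rw [powMul_succ_hom, powMul_succ_hom, ← Category.assoc, braiding_tensorMu,
      Category.assoc, Category.assoc]
    congr 1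
    rw [← tensorHom_id, ← tensorHom_id, tensorHom_comp_tensorHom, tensorHom_comp_tensorHom,
      Category.comp_id, Category.id_comp, powMul_braiding a b m]

omit [SymmetricCategory C] in
theorem powUnit_hom_rho (m : ℕ) :
    (powUnit m).hom ≫ (ρ_ (pow (𝟙_ C) m)).inv
      = (λ_ (𝟙_ C)).inv ≫ ((powUnit m).hom ⊗ₘ 𝟙 (𝟙_ C)) := by
  rw [tensorHom_id, rightUnitor_inv_naturality, unitors_inv_equal]

theorem powMul_leftUnitor (a : C) :
    ∀ m, ((powUnit m).hom ⊗ₘ 𝟙 (pow a m)) ≫ (powMul (𝟙_ C) a m).hom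
      = (λ_ (pow a m)).hom ≫ powHom (λ_ a).inv m
  | 0 => by simp [powUnit, powMul, powHom, pow]
  | m + 1 => by
    have h : ((λ_ (𝟙_ C)).inv ▷ (pow a m ⊗ a)) ≫ tensorμ (𝟙_ C) (𝟙_ C) (pow a m) a
        = (λ_ (pow a m ⊗ a)).hom ≫ ((λ_ (pow a m)).inv ⊗ₘ (λ_ a).inv) := by
      rw [tensor_left_unitality (pow a m) a]
      simp [tensorHom_comp_tensorHom]
    show (((powUnit m).hom ≫ (ρ_ _).inv) ⊗ₘ 𝟙 (pow a m ⊗ a : C)) ≫ _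
      = (λ_ (pow a m ⊗ a)).hom ≫ (powHom (λ_ a).inv m ⊗ₘ (λ_ a).inv)
    rw [powMul_succ_hom, powUnit_hom_rho, tensorHom_id, comp_whiskerRight, Category.assoc,
      tensorμ_natural_left_assoc, reassoc_of% h]
    congr 1
    rw [← tensorHom_id ((powMul (𝟙_ C) a m).hom), ← tensorHom_id ((powUnit m).hom),
      MonoidalCategory.id_whiskerRight, tensorHom_comp_tensorHom, tensorHom_comp_tensorHom,
      powMul_leftUnitor a m]
    simp

theorem powMul_rightUnitor (a : C) :
    ∀ m, (𝟙 (pow a m) ⊗ₘ (powUnit m).hom) ≫ (powMul a (𝟙_ C) m).hom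
      = (ρ_ (pow a m)).hom ≫ powHom (ρ_ a).inv m
  | 0 => by simp [powUnit, powMul, powHom, pow, unitors_equal]
  | m + 1 => by
    have h : ((pow a m ⊗ a) ◁ (λ_ (𝟙_ C)).inv) ≫ tensorμ (pow a m) a (𝟙_ C) (𝟙_ C)
        = (ρ_ (pow a m ⊗ a)).hom ≫ ((ρ_ (pow a m)).inv ⊗ₘ (ρ_ a).inv) := by
      rw [tensor_right_unitality (pow a m) a]
      simp [tensorHom_comp_tensorHom]
    show (𝟙 (pow a m ⊗ a : C) ⊗ₘ ((powUnit m).hom ≫ (ρ_ _).inv)) ≫ _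
      = (ρ_ (pow a m ⊗ a)).hom ≫ (powHom (ρ_ a).inv m ⊗ₘ (ρ_ a).inv)
    rw [powMul_succ_hom, powUnit_hom_rho, id_tensorHom, MonoidalCategory.whiskerLeft_comp,
      Category.assoc, tensorμ_natural_right_assoc, reassoc_of% h]
    congr 1
    rw [MonoidalCategory.whiskerLeft_id, ← tensorHom_id ((powMul a (𝟙_ C) m).hom),
      ← id_tensorHom, tensorHom_comp_tensorHom, tensorHom_comp_tensorHom, powMul_rightUnitor a m]
    simp

theorem powMul_assoc (a b c : C) :
    ∀ m, ((powMul a b m).hom ▷ pow c m) ≫ (powMul (a ⊗ b) c m).hom ≫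
          powHom (α_ a b c).hom m
      = (α_ (pow a m) (pow b m) (pow c m)).hom ≫ (pow a m ◁ (powMul b c m).hom) ≫
          (powMul a (b ⊗ c) m).hom
  | 0 => by
    dsimp [pow, powMul, powHom]
    monoidal
  | m + 1 => by
    have key : (((powMul a b m).hom ▷ pow c m) ⊗ₘ (𝟙 (a ⊗ b : C) ▷ c)) ≫
          ((powMul (a ⊗ b) c m).hom ▷ ((a ⊗ b) ⊗ c)) ≫
          (powHom (α_ a b c).hom m ⊗ₘ (α_ a b c).hom)
        = ((α_ (pow a m) (pow b m) (pow c m)).hom ⊗ₘ (α_ a b c).hom) ≫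
          ((pow a m ◁ (powMul b c m).hom) ⊗ₘ (a ◁ 𝟙 (b ⊗ c : C))) ≫
          ((powMul a (b ⊗ c) m).hom ▷ (a ⊗ (b ⊗ c))) := by
      rw [← tensorHom_id ((powMul (a ⊗ b) c m).hom),
        ← tensorHom_id ((powMul a (b ⊗ c) m).hom),
        tensorHom_comp_tensorHom, tensorHom_comp_tensorHom, tensorHom_comp_tensorHom, tensorHom_comp_tensorHom,
        ← tensorHom_id ((powMul a b m).hom), tensorHom_id, powMul_assoc a b c m]
      simp
    show ((powMul a b (m + 1)).hom ▷ (pow c m ⊗ c)) ≫ (powMul (a ⊗ b) c (m + 1)).hom ≫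
        (powHom (α_ a b c).hom m ⊗ₘ (α_ a b c).hom)
      = (α_ (pow a m ⊗ a) (pow b m ⊗ b) (pow c m ⊗ c)).hom ≫
        ((pow a m ⊗ a : C) ◁ (powMul b c (m + 1)).hom) ≫ (powMul a (b ⊗ c) (m + 1)).hom
    dsimp only [pow]
    rw [powMul_succ_hom, powMul_succ_hom, powMul_succ_hom, powMul_succ_hom,
      comp_whiskerRight, Category.assoc, Category.assoc,
      ← tensorHom_id ((powMul a b m).hom) (a ⊗ b), tensorμ_natural_left_assoc,
      key, tensor_associativity_assoc,
      MonoidalCategory.whiskerLeft_comp, Category.assoc,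
      ← tensorHom_id ((powMul b c m).hom), tensorμ_natural_right_assoc]

end AuxLemmas
/-- All components of the associators, unitors and braiding of `C`,
and their inverses, are `s`-homomorphisms for any supply `s` of a prop `P` in `C`. -/
theorem coherence_isos_are_homomorphisms (P : PROP) {C : Type u} [Category.{v} C]
    [MonoidalCategory C] [SymmetricCategory C] (s : Supply P C) :
    (∀ a b c : C, s.IsHomomorphism (α_ a b c).hom ∧ s.IsHomomorphism (α_ a b c).inv) ∧
    (∀ a : C, s.IsHomomorphism (λ_ a).hom ∧ s.IsHomomorphism (λ_ a).inv) ∧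
    (∀ a : C, s.IsHomomorphism (ρ_ a).hom ∧ s.IsHomomorphism (ρ_ a).inv) ∧
    (∀ a b : C, s.IsHomomorphism (β_ a b).hom ∧ s.IsHomomorphism (β_ a b).inv) := by
  classical
  -- basic consequences of the supply axioms
  have map_tensor : ∀ (c d : C) {m n : ℕ} (μ : P.Hom m n),
      s.map (c ⊗ d) μ = (powMul c d m).inv ≫ (s.map c μ ⊗ₘ s.map d μ) ≫ (powMul c d n).hom := by
    intro c d m n μ
    rw [← cancel_epi (powMul c d m).hom, s.tensor, Iso.hom_inv_id_assoc]
  have map_unit : ∀ {m n : ℕ} (μ : P.Hom m n),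
      s.map (𝟙_ C) μ = (powUnit m).inv ≫ (powUnit n).hom := by
    intro m n μ
    rw [← cancel_epi (powUnit m).hom, s.unit, Iso.hom_inv_id_assoc]
  -- the inverse of an isomorphism which is a homomorphism is a homomorphism
  have hinv : ∀ {c d : C} (f : c ≅ d), s.IsHomomorphism f.hom → s.IsHomomorphism f.inv := by
    intro c d f hf m n μ
    have h1 : powHom f.inv m ≫ powHom f.hom m = 𝟙 _ := by
      rw [← powHom_comp, f.inv_hom_id, powHom_id]
    have h2 : powHom f.hom n ≫ powHom f.inv n = 𝟙 _ := by
      rw [← powHom_comp, f.hom_inv_id, powHom_id]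
    calc powHom f.inv m ≫ s.map c μ
        = powHom f.inv m ≫ (s.map c μ ≫ powHom f.hom n) ≫ powHom f.inv n := by
          simp only [Category.assoc, h2, Category.comp_id]
      _ = powHom f.inv m ≫ (powHom f.hom m ≫ s.map d μ) ≫ powHom f.inv n := by rw [hf μ]
      _ = s.map d μ ≫ powHom f.inv n := by
          simp only [Category.assoc, reassoc_of% h1]
  -- braidings
  have hbraid : ∀ a b : C, s.IsHomomorphism (β_ a b).hom := by
    intro a b m n μ
    have hh : ∀ k, powHom (β_ a b).hom k
        = (powMul a b k).inv ≫ (β_ (pow a k) (pow b k)).hom ≫ (powMul b a k).hom := by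
      intro k
      rw [← cancel_epi (powMul a b k).hom, Iso.hom_inv_id_assoc]
      exact (powMul_braiding a b k).symm
    rw [hh m, hh n, map_tensor, map_tensor]
    simp only [Category.assoc, Iso.hom_inv_id_assoc,
      BraidedCategory.braiding_naturality_assoc]
  -- left unitor inverses
  have hlam : ∀ a : C, s.IsHomomorphism (λ_ a).inv := by
    intro a m n μ
    have hh : ∀ k, powHom (λ_ a).inv k
        = (λ_ (pow a k)).inv ≫ ((powUnit k).hom ⊗ₘ 𝟙 (pow a k)) ≫ (powMul (𝟙_ C) a k).hom := by
      intro k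
      rw [← cancel_epi (λ_ (pow a k)).hom, Iso.hom_inv_id_assoc]
      exact (powMul_leftUnitor a k).symm
    rw [hh m, hh n, map_tensor, map_unit, leftUnitor_inv_naturality_assoc]
    simp only [Category.assoc, ← tensorHom_id, ← id_tensorHom, tensorHom_comp_tensorHom_assoc,
      Category.comp_id, Category.id_comp, Iso.hom_inv_id_assoc]
  -- right unitor inverses
  have hrho : ∀ a : C, s.IsHomomorphism (ρ_ a).inv := by
    intro a m n μ
    have hh : ∀ k, powHom (ρ_ a).inv k
        = (ρ_ (pow a k)).inv ≫ (𝟙 (pow a k) ⊗ₘ (powUnit k).hom) ≫ (powMul a (𝟙_ C) k).hom := by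
      intro k
      rw [← cancel_epi (ρ_ (pow a k)).hom, Iso.hom_inv_id_assoc]
      exact (powMul_rightUnitor a k).symm
    rw [hh m, hh n, map_tensor, map_unit, rightUnitor_inv_naturality_assoc]
    simp only [Category.assoc, ← tensorHom_id, ← id_tensorHom, tensorHom_comp_tensorHom_assoc,
      Category.comp_id, Category.id_comp, Iso.hom_inv_id_assoc]
  -- associators
  have hassoc : ∀ a b c : C, s.IsHomomorphism (α_ a b c).hom := by
    intro a b c m n μ
    have hh : ∀ k, powHom (α_ a b c).hom k
        = (powMul (a ⊗ b) c k).inv ≫ ((powMul a b k).inv ▷ pow c k) ≫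
            (α_ (pow a k) (pow b k) (pow c k)).hom ≫ (pow a k ◁ (powMul b c k).hom) ≫
            (powMul a (b ⊗ c) k).hom := by
      intro k
      rw [← powMul_assoc a b c k]
      simp
    rw [hh m, hh n, map_tensor (a ⊗ b) c, map_tensor a b, map_tensor a (b ⊗ c),
      map_tensor b c]
    simp only [Category.assoc, Iso.hom_inv_id_assoc, Iso.inv_hom_id_assoc]
    simp only [← tensorHom_id, ← id_tensorHom, tensorHom_comp_tensorHom_assoc, tensorHom_comp_tensorHom,
      Category.comp_id, Category.id_comp, Category.assoc, Iso.hom_inv_id_assoc]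
    simp only [Iso.hom_inv_id, Category.comp_id]
    rw [show s.map a μ ⊗ₘ ((s.map b μ ⊗ₘ s.map c μ) ≫ (powMul b c n).hom)
        = (s.map a μ ⊗ₘ (s.map b μ ⊗ₘ s.map c μ)) ≫ (𝟙 (pow a n) ⊗ₘ (powMul b c n).hom) from by
      rw [tensorHom_comp_tensorHom, Category.comp_id]]
    simp only [Category.assoc]
    rw [← associator_naturality_assoc, tensorHom_comp_tensorHom_assoc, Category.id_comp]
  exact ⟨fun a b c => ⟨hassoc a b c, hinv (α_ a b c) (hassoc a b c)⟩,
    fun a => ⟨hinv (λ_ a).symm (hlam a), hlam a⟩,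
    fun a => ⟨hinv (ρ_ a).symm (hrho a), hrho a⟩,
    fun a b => ⟨hbraid a b, hinv (β_ a b) (hbraid a b)⟩⟩
end

section
/- Let P and Q be props, let F : P → Q be a strict symmetric monoidal functor that is the identity on objects (a prop functor), and let s be a supply of Q in a symmetric monoidal category C. Then the family assigning to each object c of C the composite functor F ≫ s_c : P → C (with the monoidal structure isomorphisms inherited from s_c) is a supply of P in C. -/
open CategoryTheory MonoidalCategory

universe v u

/-- A prop functor: a strict symmetric monoidal functor between props that is the
identity on objects. -/
structure PropFunctor (P Q : PROP) where
  map : ∀ {m n : ℕ}, P.Hom m n → Q.Hom m n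
  map_id : ∀ m, map (P.id m) = Q.id m
  map_comp : ∀ {m n p} (f : P.Hom m n) (g : P.Hom n p),
    map (P.comp f g) = Q.comp (map f) (map g)
  map_add : ∀ {m₁ n₁ m₂ n₂} (f : P.Hom m₁ n₁) (g : P.Hom m₂ n₂),
    map (P.add f g) = Q.add (map f) (map g)
  map_braid : ∀ m n, map (P.braid m n) = Q.braid m n

/-- Composition with a prop functor `F : P ⟶ Q` carries a supply of `Q`
in `C` to a supply of `P` in `C`: the family `c ↦ F ≫ s_c` is a supply of `P` in `C`. -/
theorem supply_precomposition (P Q : PROP) (F : PropFunctor P Q) {C : Type u}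
    [Category.{v} C] [MonoidalCategory C] [SymmetricCategory C] (s : Supply Q C) :
    ∃ t : Supply P C, ∀ (c : C) {m n : ℕ} (μ : P.Hom m n), t.map c μ = s.map c (F.map μ) := by
  refine ⟨{
    map := fun c _ _ μ => s.map c (F.map μ)
    map_id := fun c m => by rw [F.map_id, s.map_id]
    map_comp := fun c _ _ _ μ ν => by rw [F.map_comp, s.map_comp]
    map_add := fun c _ _ _ _ μ ν => by rw [F.map_add, s.map_add]
    map_braid := fun c m n => by rw [F.map_braid, s.map_braid]
    tensor := fun c d {_ _} μ => s.tensor c d (F.map μ)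
    unit := fun {_ _} μ => s.unit (F.map μ) }, fun c _ _ μ => rfl⟩
end

section
/- Let P be a prop, let s be a supply of P in a symmetric monoidal category C, let t be a supply of P in a symmetric monoidal category D, and let (F, φ) : C → D be a strong symmetric monoidal functor that preserves the supply. If f : c → d is an s-homomorphism in C, then F(f) : F(c) → F(d) is a t-homomorphism in D. -/
open CategoryTheory MonoidalCategory

universe v u

section
variable {C : Type u} [Category.{v} C] [MonoidalCategory C]
  {D : Type*} [Category D] [MonoidalCategory D]

/-- The canonical isomorphism `(F c)^⊗m ≅ F (c^⊗m)` built from the structure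
isomorphisms of a strong monoidal functor `F`. -/
def powComparison (F : C ⥤ D) [F.Monoidal] (c : C) :
    ∀ m : ℕ, pow (F.obj c) m ≅ F.obj (pow c m)
  | 0 => Functor.Monoidal.εIso F
  | m + 1 => whiskerRightIso (powComparison F c m) (F.obj c) ≪≫
      Functor.Monoidal.μIso F (pow c m) c

end

/-- A strong symmetric monoidal functor `(F, φ) : C ⥤ D` preserves the supplies `s` and
`t` if `t_{F c}(μ) ≫ φ⁽ⁿ⁾_c = φ⁽ᵐ⁾_c ≫ F (s_c μ)` for all `c` and all `μ : m ⟶ n` in `P`,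
where `φ⁽ᵐ⁾_c : (F c)^⊗m ≅ F (c^⊗m)` is the canonical isomorphism built from the
structure isomorphisms of `F`. -/
def PreservesSupply {P : PROP} {C : Type u} [Category.{v} C] [MonoidalCategory C]
    [SymmetricCategory C] {D : Type*} [Category D] [MonoidalCategory D]
    [SymmetricCategory D] (s : Supply P C) (t : Supply P D)
    (F : C ⥤ D) [F.Braided] : Prop :=
  ∀ (c : C) {m n : ℕ} (μ : P.Hom m n),
    t.map (F.obj c) μ ≫ (powComparison F c n).hom =
      (powComparison F c m).hom ≫ F.map (s.map c μ)

theorem powComparison_natural {C : Type u} [Category.{v} C] [MonoidalCategory C]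
    {D : Type*} [Category D] [MonoidalCategory D] (F : C ⥤ D) [F.Monoidal]
    {c d : C} (f : c ⟶ d) (m : ℕ) :
    powHom (F.map f) m ≫ (powComparison F d m).hom =
      (powComparison F c m).hom ≫ F.map (powHom f m) := by
  induction m with
  | zero =>
    simp [powHom, powComparison]
    show 𝟙 (𝟙_ D) ≫ Functor.LaxMonoidal.ε F = Functor.LaxMonoidal.ε F ≫ F.map (𝟙 (𝟙_ C))
    rw [Category.id_comp, F.map_id, Category.comp_id]
  | succ m ih =>
    simp only [powHom, powComparison, Iso.trans_hom, whiskerRightIso_hom,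
      Functor.Monoidal.μIso_hom]
    show (powHom (F.map f) m ⊗ₘ F.map f) ≫ ((powComparison F d m).hom ▷ F.obj d ≫
        Functor.LaxMonoidal.μ F (pow d m) d) = ((powComparison F c m).hom ▷ F.obj c ≫
        Functor.LaxMonoidal.μ F (pow c m) c) ≫ F.map (powHom f m ⊗ₘ f)
    rw [tensorHom_def']
    slice_lhs 2 3 => rw [← comp_whiskerRight, ih]
    rw [comp_whiskerRight]
    simp only [Category.assoc]
    rw [whisker_exchange_assoc]
    slice_lhs 2 3 => rw [← tensorHom_def']
    rw [Functor.LaxMonoidal.μ_natural]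

/-- **Statement 13.** A supply-preserving strong symmetric monoidal functor sends
`s`-homomorphisms to `t`-homomorphisms. -/
theorem preserves_homomorphisms {P : PROP} {C : Type u} [Category.{v} C]
    [MonoidalCategory C] [SymmetricCategory C] {D : Type*} [Category D]
    [MonoidalCategory D] [SymmetricCategory D] (s : Supply P C) (t : Supply P D)
    (F : C ⥤ D) [F.Braided] (hF : PreservesSupply s t F)
    {c d : C} (f : c ⟶ d) (hf : s.IsHomomorphism f) :
    t.IsHomomorphism (F.map f) := by
  intro m n μ
  have h1 := hF c μ
  have h2 := hF d μ
  have hc := powComparison_natural F f m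
  have hd := powComparison_natural F f n
  have : (powHom (F.map f) m ≫ t.map (F.obj d) μ) ≫ (powComparison F d n).hom =
      (t.map (F.obj c) μ ≫ powHom (F.map f) n) ≫ (powComparison F d n).hom := by
    rw [Category.assoc, h2, ← Category.assoc, hc, Category.assoc, ← F.map_comp, hf μ,
      F.map_comp, ← Category.assoc, ← h1, Category.assoc, Category.assoc, ← hd]
  exact (cancel_mono (powComparison F d n).hom).mp this
end
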